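/- arXiv:math/0703127 — 2 statements merged into one kernel-verified Lean document; each statement's English description precedes it below -/
import Mathlib

section
/- Let f be a transcendental entire function in the class Δ, and suppose there are constants M₀ > 0, C₁ > 1, C₂ > 1 such that log M(C₁ r, f) ≥ C₂ log M(r,f) for every r ≥ M₀. Then there exist constants M₁ > M₀ and h > 1 such that for every r > M₁ there is some r′ ∈ (r, r^h) with m(r′,f) > M(r,f)^h. -/
open Filter MeasureTheory

/-- The maximum modulus `M(r,f) = max_{|z|=r} |f z|`. -/
noncomputable def maxMod (f : ℂ → ℂ) (r : ℝ) : ℝ :=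
  sSup ((fun z => ‖f z‖) '' Metric.sphere (0 : ℂ) r)

/-- The minimum modulus `m(r,f) = min_{|z|=r} |f z|`. -/
noncomputable def minMod (f : ℂ → ℂ) (r : ℝ) : ℝ :=
  sInf ((fun z => ‖f z‖) '' Metric.sphere (0 : ℂ) r)

/-- The upper logarithmic density of a set `E ⊆ (1,∞)`:
`limsup_{R→∞} (1/log R) ∫_{E∩(1,R)} dt/t`. -/
noncomputable def upperLogDens (E : Set ℝ) : ℝ :=
  Filter.limsup (fun R : ℝ => (Real.log R)⁻¹ * ∫ t in E ∩ Set.Ioo 1 R, t⁻¹) Filter.atTop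

/-- `f` is a transcendental entire function: entire and not a polynomial. -/
def TranscendentalEntire (f : ℂ → ℂ) : Prop :=
  Differentiable ℂ f ∧ ¬ ∃ p : Polynomial ℂ, ∀ z, f z = p.eval z

/-- The order `λ(f) = limsup_{r→∞} log log M(r,f) / log r`, as an extended real. -/
noncomputable def eOrder (f : ℂ → ℂ) : EReal :=
  Filter.limsup
    (fun r : ℝ => ((Real.log (Real.log (maxMod f r)) / Real.log r : ℝ) : EReal))
    Filter.atTop

/-- The lower order `ρ(f) = liminf_{r→∞} log log M(r,f) / log r`, as an extended real. -/
noncomputable def eLowerOrder (f : ℂ → ℂ) : EReal :=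
  Filter.liminf
    (fun r : ℝ => ((Real.log (Real.log (maxMod f r)) / Real.log r : ℝ) : EReal))
    Filter.atTop

lemma minMod_nonneg (f : ℂ → ℂ) (r : ℝ) : 0 ≤ minMod f r := by
  apply Real.sInf_nonneg
  rintro x ⟨z, _, rfl⟩
  positivity

lemma maxMod_bddAbove {f : ℂ → ℂ} (hf : Continuous f) (r : ℝ) :
    BddAbove ((fun z => ‖f z‖) '' Metric.sphere (0 : ℂ) r) :=
  ((isCompact_sphere 0 r).image (continuous_norm.comp hf)).bddAbove

lemma le_maxMod {f : ℂ → ℂ} (hf : Continuous f) {r : ℝ} {z : ℂ}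
    (hz : z ∈ Metric.sphere (0 : ℂ) r) : ‖f z‖ ≤ maxMod f r :=
  le_csSup (maxMod_bddAbove hf r) ⟨z, hz, rfl⟩

lemma maxMod_mono {f : ℂ → ℂ} (hf : Differentiable ℂ f) {r₁ r₂ : ℝ}
    (h0 : 0 ≤ r₁) (h12 : r₁ ≤ r₂) : maxMod f r₁ ≤ maxMod f r₂ := by
  rcases eq_or_lt_of_le (h0.trans h12) with h2 | h2
  · have : r₁ = r₂ := le_antisymm h12 (h2 ▸ h0)
    rw [this]
  · apply csSup_le (((NormedSpace.sphere_nonempty).2 h0).image _)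
    rintro x ⟨z, hz, rfl⟩
    have hzc : z ∈ closure (Metric.ball (0 : ℂ) r₂) := by
      rw [closure_ball (0 : ℂ) h2.ne']
      simp only [Metric.mem_closedBall, dist_zero_right]
      have := Metric.mem_sphere.1 hz
      rw [dist_zero_right] at this
      rw [this]; exact h12
    have := Complex.norm_le_of_forall_mem_frontier_norm_le (U := Metric.ball (0 : ℂ) r₂)
      Metric.isBounded_ball (hf.diffContOnCl) (C := maxMod f r₂) ?_ hzc
    · simpa using this
    · intro w hw
      rw [frontier_ball (0 : ℂ) h2.ne'] at hw
      simpa using le_maxMod hf.continuous hw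

lemma exists_maxMod_gt_one {f : ℂ → ℂ} (hf : Differentiable ℂ f)
    (htr : ¬ ∃ p : Polynomial ℂ, ∀ z, f z = p.eval z) :
    ∃ r₀ > 0, 1 < maxMod f r₀ := by
  by_contra hcon
  push_neg at hcon
  have hb : ∀ z : ℂ, ‖f z‖ ≤ max 1 ‖f 0‖ := by
    intro z
    rcases eq_or_ne z 0 with rfl | hz
    · exact le_max_right _ _
    · have hz0 : (0:ℝ) < ‖z‖ := by
        simpa using hz
      have hmem : z ∈ Metric.sphere (0 : ℂ) ‖z‖ := by
        simp [Complex.norm_def, Complex.dist_eq]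
      refine le_trans (le_maxMod hf.continuous hmem) (le_trans (hcon _ hz0) (le_max_left _ _))
  have hbdd : Bornology.IsBounded (Set.range f) := by
    rw [Metric.isBounded_iff_subset_closedBall 0]
    refine ⟨max 1 ‖f 0‖, ?_⟩
    rintro x ⟨z, rfl⟩
    simpa [Complex.dist_eq] using hb z
  obtain ⟨c, hc⟩ := hf.exists_eq_const_of_bounded hbdd
  exact htr ⟨Polynomial.C c, fun z => by simp [congrFun hc z]⟩

lemma integrableOn_inv_Ioo {R : ℝ} (hR : 1 ≤ R) :
    IntegrableOn (fun t : ℝ => t⁻¹) (Set.Ioo 1 R) volume := by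
  have h : IntervalIntegrable (fun t : ℝ => t⁻¹) volume 1 R := by
    apply intervalIntegral.intervalIntegrable_inv
    · intro x hx
      rw [Set.uIcc_of_le hR] at hx
      exact ne_of_gt (lt_of_lt_of_le one_pos hx.1)
    · exact continuousOn_id
  exact (h.1).mono_set Set.Ioo_subset_Ioc_self

lemma integral_inv_Ioo {a b : ℝ} (ha : 0 < a) (hab : a ≤ b) :
    ∫ t in Set.Ioo a b, t⁻¹ = Real.log b - Real.log a := by
  rw [← integral_Ioc_eq_integral_Ioo, ← intervalIntegral.integral_of_le hab,
    integral_inv (by rw [Set.uIcc_of_le hab]; exact fun h => absurd h.1 (not_le.2 ha)),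
    Real.log_div (by linarith : b ≠ 0) ha.ne']

lemma inv_nonneg_ae {R : ℝ} :
    0 ≤ᵐ[volume.restrict (Set.Ioo (1:ℝ) R)] fun t : ℝ => t⁻¹ := by
  filter_upwards [ae_restrict_mem measurableSet_Ioo] with x hx
  exact inv_nonneg.2 (by linarith [hx.1])

lemma density_lower_bound {E : Set ℝ} {A B R : ℝ} (hR : 1 ≤ R) (hA : 0 < A) (hAB : A ≤ B)
    (hsub : Set.Ioo A B ⊆ E ∩ Set.Ioo 1 R) :
    Real.log B - Real.log A ≤ ∫ t in E ∩ Set.Ioo 1 R, t⁻¹ := by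
  have hmle : volume.restrict (E ∩ Set.Ioo 1 R) ≤ volume.restrict (Set.Ioo (1:ℝ) R) :=
    Measure.restrict_mono (Set.inter_subset_right) le_rfl
  have hint : IntegrableOn (fun t : ℝ => t⁻¹) (E ∩ Set.Ioo 1 R) volume :=
    Integrable.mono_measure (integrableOn_inv_Ioo hR) hmle
  have hnn : 0 ≤ᵐ[volume.restrict (E ∩ Set.Ioo 1 R)] fun t : ℝ => t⁻¹ :=
    inv_nonneg_ae.filter_mono (ae_mono hmle)
  rw [← integral_inv_Ioo hA hAB]
  exact setIntegral_mono_set hint hnn hsub.eventuallyLE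

lemma exists_density_bound (E : Set ℝ) {ε₁ θ : ℝ} (hd : upperLogDens E ≤ ε₁) (h1 : ε₁ < θ) :
    ∃ R₀ : ℝ, 2 ≤ R₀ ∧ ∀ R ≥ R₀, (∫ t in E ∩ Set.Ioo 1 R, t⁻¹) < θ * Real.log R := by
  have key : ∀ R : ℝ, 2 ≤ R → (∫ t in E ∩ Set.Ioo 1 R, t⁻¹) ≤ Real.log R := by
    intro R hR
    have hR1 : (1:ℝ) ≤ R := by linarith
    calc (∫ t in E ∩ Set.Ioo 1 R, t⁻¹) ≤ ∫ t in Set.Ioo 1 R, t⁻¹ := by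
          apply setIntegral_mono_set (integrableOn_inv_Ioo hR1) inv_nonneg_ae
          exact Set.inter_subset_right.eventuallyLE
      _ = Real.log R - Real.log 1 := integral_inv_Ioo one_pos hR1
      _ = Real.log R := by simp
  have hbdd : IsBoundedUnder (· ≤ ·) atTop
      (fun R : ℝ => (Real.log R)⁻¹ * ∫ t in E ∩ Set.Ioo 1 R, t⁻¹) := by
    apply isBoundedUnder_of_eventually_le (a := 1)
    filter_upwards [eventually_ge_atTop (2:ℝ)] with R hR
    have hlog : 0 < Real.log R := Real.log_pos (by linarith)
    rw [inv_mul_le_iff₀ hlog]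
    simpa using key R hR
  have hev := eventually_lt_of_limsup_lt (lt_of_le_of_lt hd h1) hbdd
  obtain ⟨R₀, hR₀⟩ := (hev.and (eventually_ge_atTop (2:ℝ))).exists_forall_of_atTop
  refine ⟨max R₀ 2, le_max_right _ _, fun R hR => ?_⟩
  obtain ⟨h1', h2'⟩ := hR₀ R (le_trans (le_max_left _ _) hR)
  have hlog : 0 < Real.log R := Real.log_pos (by linarith)
  have := mul_lt_mul_of_pos_left h1' hlog
  rw [← mul_assoc, mul_inv_cancel₀ hlog.ne', one_mul] at this
  linarith [this]

set_option maxHeartbeats 1000000 in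
theorem stmt_4 (f : ℂ → ℂ) (hf : TranscendentalEntire f)
    (hΔ : ∃ ε₁ ∈ Set.Ioo (0:ℝ) 1, ∃ ε₂ ∈ Set.Ioo (0:ℝ) 1,
      upperLogDens
        {r : ℝ | 1 < r ∧ Real.log (minMod f r) ≤ ε₂ * Real.log (maxMod f r)} ≤ ε₁)
    (M₀ C₁ C₂ : ℝ) (hM₀ : 0 < M₀) (hC₁ : 1 < C₁) (hC₂ : 1 < C₂)
    (hgrow : ∀ r ≥ M₀, Real.log (maxMod f (C₁ * r)) ≥ C₂ * Real.log (maxMod f r)) :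
    ∃ M₁ > M₀, ∃ h > (1:ℝ), ∀ r > M₁, ∃ r' ∈ Set.Ioo r (r ^ h),
      minMod f r' > maxMod f r ^ h := by
  obtain ⟨hdiff, htr⟩ := hf
  obtain ⟨ε₁, hε₁, ε₂, hε₂, hdens⟩ := hΔ
  set E := {r : ℝ | 1 < r ∧ Real.log (minMod f r) ≤ ε₂ * Real.log (maxMod f r)} with hEdef
  obtain ⟨θ, hεθ, hθ1⟩ : ∃ θ : ℝ, ε₁ < θ ∧ θ < 1 :=
    ⟨(1 + ε₁) / 2, by linarith [hε₁.2], by linarith [hε₁.2]⟩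
  have hθhalf : (0:ℝ) < 1 - θ := by linarith
  obtain ⟨h, hh2, hhθ⟩ : ∃ h : ℝ, 2 < h ∧ θ * h < h - 2 := by
    refine ⟨2 / (1 - θ) + 2, ?_, ?_⟩
    · have : 0 < 2 / (1 - θ) := by positivity
      linarith
    · have hmul : (2 / (1 - θ) + 2) * (1 - θ) = 2 + 2 * (1 - θ) := by
        field_simp
      nlinarith
  obtain ⟨R₀, hR₀2, hR₀⟩ := exists_density_bound E hdens hεθ
  obtain ⟨r₀, hr₀pos, hr₀⟩ := exists_maxMod_gt_one hdiff htr
  obtain ⟨N, hN⟩ := pow_unbounded_of_one_lt (h / ε₂) hC₂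
  have hNε : h < ε₂ * C₂ ^ N := by
    rw [div_lt_iff₀ hε₂.1] at hN; linarith [hN]
  set M₁ : ℝ := max (max (M₀ + 1) (r₀ + 1)) (max (C₁ ^ N) R₀) with hM₁def
  have hM₁M₀ : M₀ + 1 ≤ M₁ := le_trans (le_max_left _ _) (le_max_left _ _)
  refine ⟨M₁, by linarith, h, by linarith, ?_⟩
  intro r hr
  have hr1 : 1 < r := by nlinarith [hM₀]
  have hr0 : 0 < r := by linarith
  have hrM₀ : M₀ ≤ r := by linarith
  have hrr₀ : r₀ ≤ r := by
    have : r₀ + 1 ≤ M₁ := le_trans (le_max_right _ _) (le_max_left _ _)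
    linarith
  have hrC : C₁ ^ N ≤ r :=
    le_of_lt (lt_of_le_of_lt (le_trans (le_max_left _ _) (le_max_right _ _)) hr)
  have hrR₀ : R₀ ≤ r :=
    le_of_lt (lt_of_le_of_lt (le_trans (le_max_right _ _) (le_max_right _ _)) hr)
  have hMr1 : 1 < maxMod f r := lt_of_lt_of_le hr₀ (maxMod_mono hdiff hr₀pos.le hrr₀)
  have hMr0 : 0 < maxMod f r := by linarith
  have hlogMr : 0 < Real.log (maxMod f r) := Real.log_pos hMr1
  have hlogr : 0 < Real.log r := Real.log_pos hr1
  have hrh : r < r ^ h := by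
    nth_rewrite 1 [← Real.rpow_one r]
    exact Real.rpow_lt_rpow_of_exponent_lt hr1 (by linarith)
  have hr2 : r < r ^ (2:ℝ) := by
    nth_rewrite 1 [← Real.rpow_one r]
    exact Real.rpow_lt_rpow_of_exponent_lt hr1 one_lt_two
  have hr2h : r ^ (2:ℝ) < r ^ h := Real.rpow_lt_rpow_of_exponent_lt hr1 hh2
  have h1r2 : 1 < r ^ (2:ℝ) := lt_trans hr1 hr2
  have hexists : ∃ x ∈ Set.Ioo (r ^ (2:ℝ)) (r ^ h), x ∉ E := by
    by_contra hcon
    push_neg at hcon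
    have hsub : Set.Ioo (r ^ (2:ℝ)) (r ^ h) ⊆ E ∩ Set.Ioo 1 (r ^ h) := fun x hx =>
      ⟨hcon x hx, lt_trans h1r2 hx.1, hx.2⟩
    have hlow := density_lower_bound (E := E) (R := r ^ h)
      (le_of_lt (lt_trans hr1 hrh)) (by positivity) hr2h.le hsub
    have hup := hR₀ (r ^ h) (le_trans hrR₀ hrh.le)
    rw [Real.log_rpow hr0, Real.log_rpow hr0] at hlow
    rw [Real.log_rpow hr0] at hup
    have hkey := mul_lt_mul_of_pos_right hhθ hlogr
    nlinarith [hlow, hup, hkey]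
  obtain ⟨x, hxmem, hxE⟩ := hexists
  have hx1 : 1 < x := lt_trans h1r2 hxmem.1
  have hxmin : ε₂ * Real.log (maxMod f x) < Real.log (minMod f x) := by
    by_contra hc
    exact hxE ⟨hx1, le_of_not_gt hc⟩
  have hiter : ∀ n : ℕ, C₂ ^ n * Real.log (maxMod f r) ≤ Real.log (maxMod f (C₁ ^ n * r)) := by
    intro n
    induction n with
    | zero => simp
    | succ n ih =>
      have hC₁n : 1 ≤ C₁ ^ n := one_le_pow₀ hC₁.le
      have hM₀n : C₁ ^ n * r ≥ M₀ := le_trans hrM₀ (le_mul_of_one_le_left hr0.le hC₁n)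
      have hg := hgrow (C₁ ^ n * r) hM₀n
      have heq : C₁ * (C₁ ^ n * r) = C₁ ^ (n + 1) * r := by ring
      rw [heq] at hg
      calc C₂ ^ (n + 1) * Real.log (maxMod f r)
          = C₂ * (C₂ ^ n * Real.log (maxMod f r)) := by ring
        _ ≤ C₂ * Real.log (maxMod f (C₁ ^ n * r)) :=
            mul_le_mul_of_nonneg_left ih (by linarith)
        _ ≤ Real.log (maxMod f (C₁ ^ (n + 1) * r)) := hg
  have hr2eq : r ^ (2:ℝ) = r * r := by
    rw [show (2:ℝ) = ((2:ℕ):ℝ) by norm_num, Real.rpow_natCast]; ring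
  have hCNr : C₁ ^ N * r ≤ x := by
    have h1 : C₁ ^ N * r ≤ r * r := mul_le_mul_of_nonneg_right (by linarith [hrC]) hr0.le
    have := hxmem.1
    rw [hr2eq] at this
    linarith
  have hCNr0 : 0 < C₁ ^ N * r := by positivity
  have hrCN : r ≤ C₁ ^ N * r :=
    le_mul_of_one_le_left hr0.le (one_le_pow₀ hC₁.le)
  have hMCN : 0 < maxMod f (C₁ ^ N * r) :=
    lt_of_lt_of_le hMr0 (maxMod_mono hdiff hr0.le hrCN)
  have hmono2 : Real.log (maxMod f (C₁ ^ N * r)) ≤ Real.log (maxMod f x) :=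
    Real.log_le_log hMCN (maxMod_mono hdiff hCNr0.le hCNr)
  have hfinal : h * Real.log (maxMod f r) < Real.log (minMod f x) :=
    calc h * Real.log (maxMod f r) < ε₂ * C₂ ^ N * Real.log (maxMod f r) := by
          exact mul_lt_mul_of_pos_right hNε hlogMr
      _ = ε₂ * (C₂ ^ N * Real.log (maxMod f r)) := by ring
      _ ≤ ε₂ * Real.log (maxMod f (C₁ ^ N * r)) :=
          mul_le_mul_of_nonneg_left (hiter N) hε₂.1.le
      _ ≤ ε₂ * Real.log (maxMod f x) := mul_le_mul_of_nonneg_left hmono2 hε₂.1.le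
      _ < Real.log (minMod f x) := hxmin
  refine ⟨x, ⟨lt_trans hr2 hxmem.1, hxmem.2⟩, ?_⟩
  have hlogpow : Real.log (maxMod f r ^ h) = h * Real.log (maxMod f r) :=
    Real.log_rpow hMr0 h
  have hminpos : 0 < minMod f x := by
    by_contra hc
    push_neg at hc
    have h0 : Real.log (minMod f x) ≤ 0 :=
      Real.log_nonpos (minMod_nonneg f x) (le_trans hc zero_le_one)
    have hpos : 0 < h * Real.log (maxMod f r) := mul_pos (by linarith) hlogMr
    linarith
  have hlt : Real.log (maxMod f r ^ h) < Real.log (minMod f x) := by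
    rw [hlogpow]; exact hfinal
  exact (Real.log_lt_log_iff (Real.rpow_pos_of_pos hMr0 h) hminpos).1 hlt
end

section
/- Let f be a transcendental entire function, let A > 0 and B ≥ 1. If there exists a sequence R_j → ∞ of positive reals such that M(R_j^A, f) ≤ M(R_j, f)^B for every j, then A · ρ(f) ≤ λ(f). -/
open Filter MeasureTheory

lemma maxMod_mem {f : ℂ → ℂ} (hf : Continuous f) {r : ℝ} (hr : 0 ≤ r) :
    maxMod f r ∈ (fun z => ‖f z‖) '' Metric.sphere (0 : ℂ) r := by
  apply IsCompact.sSup_mem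
  · exact (isCompact_sphere 0 r).image (continuous_norm.comp hf)
  · exact (NormedSpace.sphere_nonempty.mpr hr).image _

lemma abs_le_maxMod_of_le {f : ℂ → ℂ} (hf : Differentiable ℂ f) {z : ℂ} {s : ℝ}
    (hs : 0 < s) (hz : ‖z‖ ≤ s) : ‖f z‖ ≤ maxMod f s := by
  have hbdd : BddAbove ((fun z => ‖f z‖) '' Metric.sphere (0 : ℂ) s) :=
    ((isCompact_sphere 0 s).image (continuous_norm.comp hf.continuous)).bddAbove
  have := Complex.norm_le_of_forall_mem_frontier_norm_le (U := Metric.ball (0 : ℂ) s)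
    Metric.isBounded_ball (hf.diffContOnCl) (C := maxMod f s) ?_ (z := z) ?_
  · exact this
  · intro w hw
    rw [frontier_ball 0 hs.ne'] at hw
    exact le_csSup hbdd ⟨w, hw, rfl⟩
  · rw [closure_ball 0 hs.ne', Metric.mem_closedBall]
    simpa [Complex.dist_eq] using hz

lemma maxMod_mono_s5 {f : ℂ → ℂ} (hf : Differentiable ℂ f) {r s : ℝ}
    (hr : 0 ≤ r) (hrs : r ≤ s) : maxMod f r ≤ maxMod f s := by
  rcases (hr.trans hrs).lt_or_eq with hspos | h
  case inr => rw [le_antisymm hrs (h ▸ hr)]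
  obtain ⟨z, hz, hzeq⟩ := maxMod_mem hf.continuous hr
  rw [← hzeq]
  apply abs_le_maxMod_of_le hf hspos
  rw [Metric.mem_sphere, Complex.dist_eq, sub_zero] at hz
  rw [hz]; exact hrs

lemma maxMod_tendsto {f : ℂ → ℂ} (hf : TranscendentalEntire f) :
    Filter.Tendsto (maxMod f) Filter.atTop Filter.atTop := by
  have hub : ∀ C : ℝ, ∃ r ≥ 1, C < maxMod f r := by
    by_contra h
    push_neg at h
    obtain ⟨C, hC⟩ := h
    have hbdd : Bornology.IsBounded (Set.range f) := by
      rw [isBounded_iff_forall_norm_le]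
      refine ⟨max C (maxMod f 1), ?_⟩
      rintro _ ⟨z, rfl⟩
      rcases le_total (‖z‖) 1 with hz | hz
      · exact le_max_of_le_right (abs_le_maxMod_of_le hf.1 one_pos hz)
      · refine le_max_of_le_left ?_
        calc ‖f z‖ ≤ maxMod f (‖z‖) :=
              abs_le_maxMod_of_le hf.1 (lt_of_lt_of_le one_pos hz) le_rfl
          _ ≤ C := hC _ hz
    obtain ⟨c, hc⟩ := hf.1.exists_const_forall_eq_of_bounded hbdd
    exact hf.2 ⟨Polynomial.C c, fun z => by simp [hc z]⟩
  rw [tendsto_atTop_atTop]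
  intro b
  obtain ⟨r, hr1, hrb⟩ := hub b
  exact ⟨r, fun s hs => hrb.le.trans (maxMod_mono_s5 hf.1 (by linarith) hs)⟩

theorem stmt_5 (f : ℂ → ℂ) (hf : TranscendentalEntire f)
    (A B : ℝ) (hA : 0 < A) (hB : 1 ≤ B)
    (R : ℕ → ℝ) (hRpos : ∀ j, 0 < R j)
    (hRtop : Filter.Tendsto R Filter.atTop Filter.atTop)
    (hM : ∀ j, maxMod f (R j ^ A) ≤ maxMod f (R j) ^ B) :
    (A : EReal) * eLowerOrder f ≤ eOrder f := by
  have hMtop : Filter.Tendsto (maxMod f) Filter.atTop Filter.atTop := maxMod_tendsto hf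
  set u : ℝ → ℝ := fun r => Real.log (Real.log (maxMod f r)) / Real.log r with hu
  have hS : Filter.Tendsto (fun j => R j ^ A) Filter.atTop Filter.atTop :=
    (tendsto_rpow_atTop hA).comp hRtop
  refine EReal.ge_of_forall_gt_iff_ge.mp (fun x hx => ?_)
  -- Step 1: x/A < eLowerOrder f
  have hd : ((x / A : ℝ) : EReal) < eLowerOrder f := by
    by_contra h
    push_neg at h
    have h2 : (A : EReal) * eLowerOrder f ≤ (A : EReal) * ((x / A : ℝ) : EReal) :=
      mul_le_mul_of_nonneg_left h (by exact_mod_cast hA.le)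
    rw [← EReal.coe_mul] at h2
    have h3 : (A * (x / A) : ℝ) = x := by field_simp
    rw [h3] at h2
    exact absurd (hx.trans_le h2) (lt_irrefl _)
  have hev : ∀ᶠ r in Filter.atTop, ((x / A : ℝ) : EReal) <
      ((Real.log (Real.log (maxMod f r)) / Real.log r : ℝ) : EReal) :=
    Filter.eventually_lt_of_lt_liminf hd
  have h1 : ∀ᶠ j in Filter.atTop, 1 < R j := hRtop.eventually (Filter.eventually_gt_atTop 1)
  have h2 : ∀ᶠ j in Filter.atTop, 1 < maxMod f (R j) :=
    hRtop.eventually (hMtop.eventually (Filter.eventually_gt_atTop 1))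
  have h3 : ∀ᶠ j in Filter.atTop, 1 < maxMod f (R j ^ A) :=
    hS.eventually (hMtop.eventually (Filter.eventually_gt_atTop 1))
  have h4 : ∀ᶠ j in Filter.atTop, x / A < u (R j ^ A) :=
    hS.eventually (hev.mono fun r hr => by exact_mod_cast hr)
  have key : ∀ᶠ j in Filter.atTop, x - Real.log B / Real.log (R j) ≤ u (R j) := by
    filter_upwards [h1, h2, h3, h4] with j hr1 hMr hMs hx4
    have hrpos : (0 : ℝ) < R j := hRpos j
    have hlogr : 0 < Real.log (R j) := Real.log_pos hr1
    have hlogs : Real.log (R j ^ A) = A * Real.log (R j) := Real.log_rpow hrpos A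
    have hLs : 0 < Real.log (maxMod f (R j ^ A)) := Real.log_pos hMs
    have hLr : 0 < Real.log (maxMod f (R j)) := Real.log_pos hMr
    have h5 : x * Real.log (R j) < Real.log (Real.log (maxMod f (R j ^ A))) := by
      have hx4' : x / A < Real.log (Real.log (maxMod f (R j ^ A))) / (A * Real.log (R j)) := by
        have h0 : x / A < Real.log (Real.log (maxMod f (R j ^ A))) / Real.log (R j ^ A) := hx4
        rwa [hlogs] at h0
      have := (div_lt_div_iff₀ hA (by positivity)).mp hx4'
      nlinarith
    have h6 : Real.log (maxMod f (R j ^ A)) ≤ B * Real.log (maxMod f (R j)) := by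
      calc Real.log (maxMod f (R j ^ A)) ≤ Real.log (maxMod f (R j) ^ B) :=
            Real.log_le_log (by linarith) (hM j)
        _ = B * Real.log (maxMod f (R j)) := Real.log_rpow (by linarith) B
    have h7 : Real.log (Real.log (maxMod f (R j ^ A))) ≤
        Real.log B + Real.log (Real.log (maxMod f (R j))) := by
      calc Real.log (Real.log (maxMod f (R j ^ A)))
          ≤ Real.log (B * Real.log (maxMod f (R j))) := Real.log_le_log hLs h6
        _ = Real.log B + Real.log (Real.log (maxMod f (R j))) :=
            Real.log_mul (by linarith) hLr.ne'
    show x - Real.log B / Real.log (R j) ≤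
      Real.log (Real.log (maxMod f (R j))) / Real.log (R j)
    rw [sub_le_iff_le_add, ← add_div, le_div_iff₀ hlogr]
    linarith
  -- Step 2: x ≤ eOrder f
  refine EReal.ge_of_forall_gt_iff_ge.mp (fun y hy => ?_)
  have hy' : y < x := by exact_mod_cast hy
  have hlogtop : Filter.Tendsto (fun j => Real.log (R j)) Filter.atTop Filter.atTop :=
    Real.tendsto_log_atTop.comp hRtop
  have hc : Filter.Tendsto (fun j => Real.log B / Real.log (R j)) Filter.atTop (nhds 0) :=
    Filter.Tendsto.div_atTop tendsto_const_nhds hlogtop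
  have hcev : ∀ᶠ j in Filter.atTop, Real.log B / Real.log (R j) < x - y :=
    hc.eventually_lt_const (by linarith)
  have hev2 : ∀ᶠ j in Filter.atTop, y ≤ u (R j) := by
    filter_upwards [key, hcev] with j hk hcj
    linarith
  have hev3 : ∀ᶠ r in Filter.map R Filter.atTop, (y : EReal) ≤
      ((Real.log (Real.log (maxMod f r)) / Real.log r : ℝ) : EReal) := by
    rw [Filter.eventually_map]
    exact hev2.mono fun j hj => by exact_mod_cast hj
  have hyle : (y : EReal) ≤ Filter.liminf
      (fun r : ℝ => ((Real.log (Real.log (maxMod f r)) / Real.log r : ℝ) : EReal))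
      (Filter.map R Filter.atTop) :=
    Filter.le_liminf_of_le (by isBoundedDefault) hev3
  have hmapne : (Filter.map R Filter.atTop).NeBot := Filter.map_neBot
  calc (y : EReal) ≤ _ := hyle
    _ ≤ Filter.limsup
        (fun r : ℝ => ((Real.log (Real.log (maxMod f r)) / Real.log r : ℝ) : EReal))
        (Filter.map R Filter.atTop) := Filter.liminf_le_limsup
    _ ≤ eOrder f := Filter.limsup_le_limsup_of_le hRtop
end
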